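/- Define a(λ) for partitions λ by a(∅) = 1 and, for λ = (λ₁,…,λ_r) with r ≥ 1, a(λ) = a(λ₁,…,λ_{r−1}) + λ_r·a(λ₁−1,…,λ_r−1) (dropping zero parts). Then for all q ≥ 1 and t ≥ 1, a(q^t, q−1) < a(q^t, q), where (q^t, q−1) denotes the partition with t parts equal to q followed by one part q−1 (omitted if q = 1). -/

import Mathlib

def colErase (l : List ℕ) : List ℕ := (l.map (· - 1)).filter (· ≠ 0)

def IsPartition (l : List ℕ) : Prop := l.Pairwise (· ≥ ·) ∧ ∀ x ∈ l, 0 < x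

lemma isPartition_dropLast {l : List ℕ} (h : IsPartition l) : IsPartition l.dropLast :=
  ⟨h.1.sublist (List.dropLast_sublist l), fun x hx => h.2 x (List.dropLast_subset l hx)⟩

lemma isPartition_colErase {l : List ℕ} (h : IsPartition l) : IsPartition (colErase l) := by
  constructor
  · exact List.Pairwise.sublist List.filter_sublist (List.Pairwise.map _ (fun {x y} hxy => Nat.sub_le_sub_right hxy 1) h.1)
  · intro x hx
    simp only [colErase, List.mem_filter, decide_eq_true_eq] at hx
    omega

lemma sum_map_sub_le (l : List ℕ) : (l.map (· - 1)).sum ≤ l.sum := by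
  induction l with
  | nil => simp
  | cons a t ih => simp only [List.map_cons, List.sum_cons]; omega

lemma colErase_sum_lt {l : List ℕ} (hne : l ≠ []) (hpos : ∀ x ∈ l, 0 < x) :
    (colErase l).sum < l.sum := by
  have h1 : (colErase l).sum ≤ (l.map (· - 1)).sum :=
    List.filter_sublist.sum_le_sum (by simp)
  cases l with
  | nil => exact absurd rfl hne
  | cons a t =>
    have ha : 0 < a := hpos a (by simp)
    have := sum_map_sub_le t
    simp only [colErase, List.map_cons, List.sum_cons] at h1 ⊢
    omega

lemma dropLast_sum_lt {l : List ℕ} (hne : l ≠ []) (hpos : ∀ x ∈ l, 0 < x) :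
    l.dropLast.sum < l.sum := by
  conv_rhs => rw [← List.dropLast_append_getLast hne]
  have : 0 < l.getLast hne := hpos _ (List.getLast_mem hne)
  simp [List.sum_append]; omega

lemma getLastD_pos {l : List ℕ} (hne : l ≠ []) (hpos : ∀ x ∈ l, 0 < x) :
    0 < l.getLastD 0 := by
  rw [List.getLastD_eq_getLast?, List.getLast?_eq_getLast hne]
  exact hpos _ (List.getLast_mem hne)

lemma a_pos (a : List ℕ → ℤ) (h0 : a [] = 1)
    (hrec : ∀ l : List ℕ, IsPartition l → l ≠ [] →
      a l = a l.dropLast + (l.getLastD 0 : ℤ) * a (colErase l)) :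
    ∀ l : List ℕ, IsPartition l → 0 < a l := by
  suffices h : ∀ n : ℕ, ∀ l : List ℕ, l.sum ≤ n → IsPartition l → 0 < a l by
    intro l hl; exact h l.sum l le_rfl hl
  intro n
  induction n using Nat.strong_induction_on with
  | _ n ih =>
    intro l hsum hl
    rcases eq_or_ne l [] with rfl | hne
    · simp [h0]
    · rw [hrec l hl hne]
      have hd : 0 < a l.dropLast := by
        rcases Nat.eq_zero_or_pos n with rfl | hn
        · exact absurd (Nat.eq_zero_of_le_zero hsum) (by
            intro h'; exact hne (by
              cases l with
              | nil => rfl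
              | cons x t =>
                have := hl.2 x (by simp)
                simp [List.sum_cons] at h'; omega))
        · exact ih (l.dropLast.sum) (lt_of_lt_of_le (dropLast_sum_lt hne hl.2) hsum)
            _ le_rfl (isPartition_dropLast hl)
      have hc : 0 < a (colErase l) :=
        ih ((colErase l).sum) (lt_of_lt_of_le (colErase_sum_lt hne hl.2) hsum)
          _ le_rfl (isPartition_colErase hl)
      have hg : (0 : ℤ) < (l.getLastD 0 : ℤ) := by
        exact_mod_cast getLastD_pos hne hl.2
      nlinarith

lemma isPartition_replicate (t q : ℕ) (hq : 1 ≤ q) : IsPartition (List.replicate t q) := by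
  constructor
  · exact List.pairwise_replicate.mpr (Or.inr (le_refl q))
  · intro x hx; rw [List.eq_of_mem_replicate hx]; omega

lemma isPartition_rep_concat (t q r : ℕ) (hr : 1 ≤ r) (hrq : r ≤ q) :
    IsPartition (List.replicate t q ++ [r]) := by
  constructor
  · show List.Pairwise _ _
    rw [List.pairwise_append]
    refine ⟨(isPartition_replicate t q (le_trans hr hrq)).1, by simp, ?_⟩
    intro x hx y hy
    rw [List.eq_of_mem_replicate hx]
    simp at hy; omega
  · intro x hx
    rcases List.mem_append.mp hx with h | h
    · rw [List.eq_of_mem_replicate h]; omega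
    · simp at h; omega

lemma colErase_replicate (n q : ℕ) :
    colErase (List.replicate n q) = if q - 1 = 0 then [] else List.replicate n (q - 1) := by
  simp only [colErase, List.map_replicate, List.filter_replicate]
  split <;> simp_all

lemma dropLast_rep_concat (t : ℕ) (q r : ℕ) :
    (List.replicate t q ++ [r]).dropLast = List.replicate t q := by
  simp

lemma getLastD_rep_concat (t q r : ℕ) : (List.replicate t q ++ [r]).getLastD 0 = r := by
  simp [List.getLastD_eq_getLast?]

lemma colErase_rep_concat (t q r : ℕ) :
    colErase (List.replicate t q ++ [r]) =
      (if q - 1 = 0 then [] else List.replicate t (q - 1)) ++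
        (if r - 1 = 0 then [] else [r - 1]) := by
  simp only [colErase, List.map_append, List.filter_append, List.map_replicate,
    List.filter_replicate, List.map_cons, List.map_nil, List.filter_cons, List.filter_nil]
  congr 1
  · split <;> simp_all
  · split <;> simp_all

lemma ifEq (q : ℕ) (hq : 1 ≤ q) :
    (if q - 1 = 0 then ([] : List ℕ) else [q - 1]) = (if q = 1 then [] else [q - 1]) := by
  split <;> split <;> first | rfl | omega

theorem stmt_10 (a : List ℕ → ℤ) (h0 : a [] = 1)
    (hrec : ∀ l : List ℕ, IsPartition l → l ≠ [] →
      a l = a l.dropLast + (l.getLastD 0 : ℤ) * a (colErase l))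
    (q t : ℕ) (hq : 1 ≤ q) (ht : 1 ≤ t) :
    a (List.replicate t q ++ if q = 1 then [] else [q - 1]) <
      a (List.replicate (t + 1) q) := by
  induction q, hq using Nat.le_induction with
  | base =>
    simp only [if_pos rfl, List.append_nil]
    have h2 := hrec (List.replicate (t + 1) 1) (isPartition_replicate _ _ le_rfl) (by simp)
    rw [show List.replicate (t + 1) 1 = List.replicate t 1 ++ [1] from List.replicate_succ' ..]
      at h2 ⊢
    rw [dropLast_rep_concat, getLastD_rep_concat, colErase_rep_concat] at h2
    simp only [Nat.sub_self, reduceIte, List.append_nil, List.nil_append, h0] at h2 ⊢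
    rw [h2]; push_cast; linarith
  | succ q hq ih =>
    rw [if_neg (by omega), show q + 1 - 1 = q from rfl]
    have hL := hrec (List.replicate t (q + 1) ++ [q])
      (isPartition_rep_concat t (q + 1) q hq (by omega)) (by simp)
    have hR := hrec (List.replicate (t + 1) (q + 1))
      (isPartition_replicate _ _ (by omega)) (by simp)
    rw [show List.replicate (t + 1) (q + 1) = List.replicate t (q + 1) ++ [q + 1] from
      List.replicate_succ' ..] at hR ⊢
    rw [dropLast_rep_concat, getLastD_rep_concat, colErase_rep_concat] at hL hR
    simp only [show q + 1 - 1 = q from rfl, if_neg (show ¬ q = 0 by omega)] at hL hR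
    rw [ifEq q hq] at hL
    rw [show List.replicate t q ++ [q] = List.replicate (t + 1) q from
      (List.replicate_succ' ..).symm] at hR
    have hXpos : 0 < a (List.replicate t q ++ if q = 1 then [] else [q - 1]) := by
      apply a_pos a h0 hrec
      split
      · simp only [List.append_nil]; exact isPartition_replicate t q hq
      · exact isPartition_rep_concat t q (q - 1) (by omega) (by omega)
    rw [hL, hR]
    have h1 : (q : ℤ) * a (List.replicate t q ++ if q = 1 then [] else [q - 1]) <
        (q : ℤ) * a (List.replicate (t + 1) q) :=
      mul_lt_mul_of_pos_left ih (by exact_mod_cast hq)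
    have hY : 0 < a (List.replicate (t + 1) q) := lt_trans hXpos ih
    push_cast
    linarith
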